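/- For the product G = G^{θ_D}(1,D)⋯G^{θ_2}(1,2) of Givens rotations in the (1,k) planes applied in increasing order of k, the first row of G is given by G_{11} = cos θ_2 cos θ_3 ⋯ cos θ_D and G_{1k} = sin θ_k cos θ_{k+1} ⋯ cos θ_D for 2 ≤ k ≤ D. -/

import Mathlib

open Matrix
open Fin.NatCast

/-- The Givens rotation matrix `G^θ(i,j)`. -/
noncomputable def givens (D : ℕ) (i j : Fin D) (θ : ℝ) : Matrix (Fin D) (Fin D) ℝ :=
  Matrix.of fun k l =>
    if k = i ∧ l = i then Real.cos θ
    else if k = i ∧ l = j then Real.sin θ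
    else if k = j ∧ l = i then -Real.sin θ
    else if k = j ∧ l = j then Real.cos θ
    else if k = l then 1 else 0

/-- The product `G = G^{θ_D}(1,D) ⋯ G^{θ_2}(1,2)` (0-based indices: planes
`(0,k)`, `k = 1, …, D-1`, applied in increasing order of `k`). -/
noncomputable def givensProd (n : ℕ) (θ : Fin (n + 1) → ℝ) :
    Matrix (Fin (n + 1)) (Fin (n + 1)) ℝ :=
  (((List.finRange (n + 1)).drop 1).reverse.map
    (fun k => givens (n + 1) 0 k (θ k))).prod

/-- Partial products `P m = G(0,m) ⋯ G(0,1)`. -/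
noncomputable def Pmat (n : ℕ) (θ : Fin (n + 1) → ℝ) : ℕ → Matrix (Fin (n + 1)) (Fin (n + 1)) ℝ
  | 0 => 1
  | m + 1 => givens (n + 1) 0 ((m + 1 : ℕ) : Fin (n + 1)) (θ ((m + 1 : ℕ) : Fin (n + 1)))
      * Pmat n θ m

lemma drop_finRange (n : ℕ) :
    (List.finRange (n + 1)).drop 1
      = (List.range n).map (fun i => ((i + 1 : ℕ) : Fin (n + 1))) := by
  apply List.ext_getElem
  · simp
  · intro i h1 h2
    simp only [List.getElem_drop, List.getElem_finRange, List.getElem_map, List.getElem_range]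
    ext
    simp only [List.length_drop, List.length_finRange] at h1
    rw [Fin.val_cast_of_lt (by omega)]
    simp
    omega

lemma list_prod_eq (n : ℕ) (θ : Fin (n + 1) → ℝ) (m : ℕ) :
    (((List.range m).reverse).map
      (fun i => givens (n + 1) 0 ((i + 1 : ℕ) : Fin (n + 1)) (θ ((i + 1 : ℕ) : Fin (n + 1))))).prod
      = Pmat n θ m := by
  induction m with
  | zero => simp [Pmat]
  | succ m ih =>
      rw [List.range_succ, List.reverse_append]
      simp only [List.reverse_cons, List.reverse_nil, List.nil_append, List.singleton_append,
        List.map_cons, List.prod_cons, ih]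
      rfl

lemma givensProd_eq_Pmat (n : ℕ) (θ : Fin (n + 1) → ℝ) : givensProd n θ = Pmat n θ n := by
  rw [givensProd, drop_finRange, ← list_prod_eq n θ n, ← List.map_reverse, List.map_map]
  rfl

lemma givens_row0 (n : ℕ) (c : Fin (n + 1)) (hc : c ≠ 0) (φ : ℝ) (l : Fin (n + 1)) :
    givens (n + 1) 0 c φ 0 l
      = (if l = 0 then Real.cos φ else 0) + (if l = c then Real.sin φ else 0) := by
  simp only [givens, Matrix.of_apply, true_and]
  split_ifs with h1 h2 h3 h4 h5 <;> simp_all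

lemma givens_other_row (n : ℕ) (c j : Fin (n + 1)) (hj0 : j ≠ 0) (hjc : j ≠ c) (φ : ℝ)
    (l : Fin (n + 1)) : givens (n + 1) 0 c φ j l = if j = l then 1 else 0 := by
  simp only [givens, Matrix.of_apply]
  split_ifs <;> simp_all

lemma Pmat_high (n : ℕ) (θ : Fin (n + 1) → ℝ) :
    ∀ m, m ≤ n → ∀ j l : Fin (n + 1), m < j.val →
      Pmat n θ m j l = if j = l then 1 else 0 := by
  intro m
  induction m with
  | zero => intro _ j l _ ; simp [Pmat, Matrix.one_apply]
  | succ m ih =>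
      intro hm j l hj
      set c : Fin (n + 1) := ((m + 1 : ℕ) : Fin (n + 1)) with hc
      have hcv : c.val = m + 1 := Fin.val_cast_of_lt (by omega)
      have hj0 : j ≠ 0 := by
        intro h; rw [h] at hj; simp at hj
      have hjc : j ≠ c := by
        intro h; rw [h, hcv] at hj; omega
      show (givens (n + 1) 0 c (θ c) * Pmat n θ m) j l = _
      rw [Matrix.mul_apply]
      simp_rw [givens_other_row n c j hj0 hjc, ite_mul, one_mul, zero_mul,
        Finset.sum_ite_eq, Finset.mem_univ, if_pos]
      exact ih (by omega) j l (by omega)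

lemma Pmat_row0 (n : ℕ) (θ : Fin (n + 1) → ℝ) :
    ∀ m, m ≤ n →
      (Pmat n θ m 0 0
          = ∏ j ∈ Finset.univ.filter (fun j : Fin (n + 1) => 0 < j.val ∧ j.val ≤ m),
              Real.cos (θ j)) ∧
      (∀ k : Fin (n + 1), 0 < k.val → k.val ≤ m →
          Pmat n θ m 0 k
            = Real.sin (θ k)
              * ∏ j ∈ Finset.univ.filter (fun j : Fin (n + 1) => k.val < j.val ∧ j.val ≤ m),
                  Real.cos (θ j)) ∧
      (∀ k : Fin (n + 1), m < k.val → Pmat n θ m 0 k = 0) := by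
  intro m
  induction m with
  | zero =>
      intro _
      refine ⟨?_, fun k hk hk' => by omega, fun k hk => ?_⟩
      · have : Finset.univ.filter (fun j : Fin (n + 1) => 0 < j.val ∧ j.val ≤ 0) = ∅ := by
          ext j; simp; omega
        rw [show Pmat n θ 0 = 1 from rfl, this]
        simp [Matrix.one_apply]
      · have : (0 : Fin (n + 1)) ≠ k := by
          intro h; rw [← h] at hk; simp at hk
        simp [Pmat, Matrix.one_apply, this]
  | succ m ih =>
      intro hm
      obtain ⟨ih1, ih2, ih3⟩ := ih (by omega)
      set c : Fin (n + 1) := ((m + 1 : ℕ) : Fin (n + 1)) with hc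
      have hcv : c.val = m + 1 := Fin.val_cast_of_lt (by omega)
      have hc0 : c ≠ 0 := by
        intro h
        have := congrArg Fin.val h
        rw [hcv] at this; simp at this
      have key : ∀ l : Fin (n + 1),
          Pmat n θ (m + 1) 0 l
            = Real.cos (θ c) * Pmat n θ m 0 l
              + Real.sin (θ c) * (if c = l then 1 else 0) := by
        intro l
        show (givens (n + 1) 0 c (θ c) * Pmat n θ m) 0 l = _
        rw [Matrix.mul_apply]
        simp_rw [givens_row0 n c hc0 (θ c), add_mul, ite_mul, zero_mul,
          Finset.sum_add_distrib, Finset.sum_ite_eq', Finset.mem_univ, if_pos]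
        rw [Pmat_high n θ m (by omega) c l (by omega)]
      have hmem : ∀ k : ℕ,
          c ∉ Finset.univ.filter (fun j : Fin (n + 1) => k < j.val ∧ j.val ≤ m) := by
        intro k; simp [hcv]
      have hset : ∀ k : ℕ, k ≤ m →
          Finset.univ.filter (fun j : Fin (n + 1) => k < j.val ∧ j.val ≤ m + 1)
            = insert c (Finset.univ.filter (fun j : Fin (n + 1) => k < j.val ∧ j.val ≤ m)) := by
        intro k hk
        ext j
        have := j.isLt
        simp only [Finset.mem_insert, Finset.mem_filter, Finset.mem_univ, true_and]
        constructor
        · rintro ⟨h1, h2⟩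
          rcases Nat.lt_or_ge j.val (m + 1) with h | h
          · exact Or.inr ⟨h1, by omega⟩
          · exact Or.inl (Fin.ext (by omega))
        · rintro (rfl | ⟨h1, h2⟩)
          · exact ⟨by omega, by omega⟩
          · exact ⟨h1, by omega⟩
      refine ⟨?_, ?_, ?_⟩
      · rw [key 0, if_neg hc0, hset 0 (by omega), Finset.prod_insert (hmem 0), ih1]
        ring
      · intro k hk hk'
        rcases Nat.lt_or_ge k.val (m + 1) with h | h
        · have hck : c ≠ k := by
            intro h'; rw [← h', hcv] at h; omega
          rw [key k, if_neg hck, ih2 k hk (by omega), hset k.val (by omega),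
            Finset.prod_insert (hmem k.val)]
          ring
        · have hkc : k = c := Fin.ext (by omega)
          have hempty : Finset.univ.filter
              (fun j : Fin (n + 1) => k.val < j.val ∧ j.val ≤ m + 1) = ∅ := by
            ext j; simp; omega
          rw [key k, ih3 k (by omega), hempty, if_pos hkc.symm, hkc]
          simp
      · intro k hk
        have hck : c ≠ k := by
          intro h'; rw [h'] at hcv; omega
        rw [key k, ih3 k (by omega), if_neg hck]
        ring

theorem stmt_10 {n : ℕ} (hD : 2 ≤ n + 1) (θ : Fin (n + 1) → ℝ) :
    givensProd n θ 0 0 = ∏ m ∈ Finset.univ.erase 0, Real.cos (θ m) ∧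
    ∀ k : Fin (n + 1), k ≠ 0 →
      givensProd n θ 0 k
        = Real.sin (θ k) * ∏ m ∈ Finset.Ioi k, Real.cos (θ m) := by
  obtain ⟨h1, h2, _⟩ := Pmat_row0 n θ n le_rfl
  constructor
  · rw [givensProd_eq_Pmat, h1]
    congr 1
    ext j
    have := j.isLt
    simp only [Finset.mem_filter, Finset.mem_univ, true_and, Finset.mem_erase,
      Ne, Fin.ext_iff, Fin.val_zero, and_true]
    omega
  · intro k hk
    have hk0 : 0 < k.val := by
      rcases Nat.eq_zero_or_pos k.val with h | h
      · exact absurd (Fin.ext (by simpa using h)) hk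
      · exact h
    rw [givensProd_eq_Pmat, h2 k hk0 (by omega)]
    congr 1
    apply Finset.prod_congr _ (fun _ _ => rfl)
    ext j
    have := j.isLt
    simp only [Finset.mem_Ioi, Finset.mem_filter, Finset.mem_univ, true_and, Fin.lt_def]
    omega
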